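/- Let N, q, m be integers with (q+1)/2 + 1 ≤ m ≤ q-2 and m ≤ N-1, and let p ∈ (0,1). Define M¹(m) = ((1-p)²/p) · (N-m)(q-m-1) / ((2m+3-q)(2m+2-q)). Then the second forward quotient M¹(m)/M¹(m-1) equals ((2m-q)(2m-q+1)(N-m)(q-m-1)) / ((2m-q+2)(2m-q+3)(N-m+1)(q-m)), and this quantity is strictly less than 1 whenever all factors appearing are positive. -/

import Mathlib

lemma aux_div (C X Y X' Y' : ℝ) (hC : C ≠ 0) (hY : Y ≠ 0) (hX' : X' ≠ 0) (hY' : Y' ≠ 0) :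
    (C * X / Y) / (C * X' / Y') = (X * Y') / (X' * Y) := by
  field_simp

/-- The second forward quotient
`M¹(m)/M¹(m-1) = (2m-q)(2m-q+1)(N-m)(q-m-1) / ((2m-q+2)(2m-q+3)(N-m+1)(q-m))`,
and it is strictly less than 1. -/
theorem second_forward_quotient (N q m : ℤ)
    (hlow : ((q : ℝ) + 1) / 2 + 1 ≤ (m : ℝ)) (hhigh : m ≤ q - 2) (hmN : m ≤ N - 1)
    (p : ℝ) (hp : p ∈ Set.Ioo (0 : ℝ) 1)
    (M : ℤ → ℝ)
    (hM : ∀ k : ℤ, M k = ((1 - p) ^ 2 / p) * (((N : ℝ) - k) * ((q : ℝ) - k - 1)) /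
        ((2 * (k : ℝ) + 3 - q) * (2 * (k : ℝ) + 2 - q))) :
    M m / M (m - 1)
        = ((2 * (m : ℝ) - q) * (2 * (m : ℝ) - q + 1) * ((N : ℝ) - m) * ((q : ℝ) - m - 1)) /
          ((2 * (m : ℝ) - q + 2) * (2 * (m : ℝ) - q + 3) * ((N : ℝ) - m + 1) * ((q : ℝ) - m))
      ∧ M m / M (m - 1) < 1 := by
  obtain ⟨hp0, hp1⟩ := hp
  have hhR : (m : ℝ) ≤ (q : ℝ) - 2 := by exact_mod_cast hhigh
  have hNR : (m : ℝ) ≤ (N : ℝ) - 1 := by exact_mod_cast hmN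
  have ha : (3 : ℝ) ≤ 2 * (m : ℝ) - q := by linarith
  have h1 : (0:ℝ) < 2 * (m : ℝ) - q := by linarith
  have h2 : (0:ℝ) < 2 * (m : ℝ) - q + 1 := by linarith
  have h3 : (0:ℝ) < 2 * (m : ℝ) - q + 2 := by linarith
  have h4 : (0:ℝ) < 2 * (m : ℝ) - q + 3 := by linarith
  have hcN : (0:ℝ) < (N : ℝ) - m := by linarith
  have hdq : (0:ℝ) < (q : ℝ) - m - 1 := by linarith
  have hcast : ((m - 1 : ℤ) : ℝ) = (m : ℝ) - 1 := by push_cast; ring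
  have hp' : (1:ℝ) - p ≠ 0 := by linarith
  have hC : ((1 - p) ^ 2 / p) ≠ 0 := div_ne_zero (pow_ne_zero 2 hp') (ne_of_gt hp0)
  have heq : M m / M (m - 1)
      = ((2 * (m : ℝ) - q) * (2 * (m : ℝ) - q + 1) * ((N : ℝ) - m) * ((q : ℝ) - m - 1)) /
        ((2 * (m : ℝ) - q + 2) * (2 * (m : ℝ) - q + 3) * ((N : ℝ) - m + 1) * ((q : ℝ) - m)) := by
    rw [hM m, hM (m - 1), hcast]
    rw [aux_div _ _ _ _ _ hC
      (ne_of_gt (mul_pos (by linarith) (by linarith : (0:ℝ) < 2 * (m : ℝ) + 2 - q)))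
      (ne_of_gt (mul_pos (by linarith) (by linarith : (0:ℝ) < (q : ℝ) - ((m : ℝ) - 1) - 1)))
      (ne_of_gt (mul_pos (by linarith) (by linarith : (0:ℝ) < 2 * ((m : ℝ) - 1) + 2 - q)))]
    rw [div_eq_div_iff
      (ne_of_gt (show (0:ℝ) < ((N : ℝ) - ((m : ℝ) - 1)) * ((q : ℝ) - ((m : ℝ) - 1) - 1) * ((2 * (m : ℝ) + 3 - q) * (2 * (m : ℝ) + 2 - q)) from
        mul_pos (mul_pos (by linarith) (by linarith)) (mul_pos (by linarith) (by linarith))))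
      (ne_of_gt (show (0:ℝ) < (2 * (m : ℝ) - q + 2) * (2 * (m : ℝ) - q + 3) * ((N : ℝ) - m + 1) * ((q : ℝ) - m) from
        mul_pos (mul_pos (mul_pos h3 h4) (by linarith)) (by linarith)))]
    ring
  refine ⟨heq, ?_⟩
  rw [heq, div_lt_one (mul_pos (mul_pos (mul_pos h3 h4) (by linarith : (0:ℝ) < (N:ℝ) - m + 1)) (by linarith : (0:ℝ) < (q:ℝ) - m))]
  nlinarith [mul_pos h1 h2, mul_pos hcN hdq, mul_pos (mul_pos h1 h2) hcN,
    mul_pos (mul_pos h3 h4) hcN, mul_pos h3 h4]
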